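/- Moll's minimum conjecture: for every integer m ≥ 2, the sequence {i(i+1)(d_i(m)² − d_{i+1}(m) d_{i-1}(m))}_{1 ≤ i ≤ m} attains its minimum at i = m, with minimum value 2^{-2m} m(m+1) C(2m,m)². That is, for all 1 ≤ i ≤ m−1, i(i+1)(d_i(m)² − d_{i+1}(m)d_{i-1}(m)) > m(m+1) d_m(m)² = 2^{-2m} m(m+1) C(2m,m)². -/

import Mathlib

noncomputable def d (m i : ℕ) : ℚ :=
  (2:ℚ)^(-(2*(m:ℤ))) * ∑ k ∈ Finset.Icc i m,
    (2:ℚ)^k * (Nat.choose (2*m-2*k) (m-k)) * (Nat.choose (m+k) k) * (Nat.choose k i)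

namespace MollAux

/-- weight -/
noncomputable def A (m k : ℕ) : ℚ :=
  (2:ℚ)^k * (Nat.choose (2*m-2*k) (m-k)) * (Nat.choose (m+k) k)

lemma d_eq (m i : ℕ) : d m i
    = (2:ℚ)^(-(2*(m:ℤ))) * ∑ k ∈ Finset.Icc i m, A m k * (Nat.choose k i : ℚ) := by
  unfold d A
  rfl

lemma A_pos (m k : ℕ) : 0 < A m k := by
  unfold A
  have h1 : 0 < (Nat.choose (2*m-2*k) (m-k) : ℚ) := by
    exact_mod_cast Nat.choose_pos (by omega)
  have h2 : 0 < (Nat.choose (m+k) k : ℚ) := by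
    exact_mod_cast Nat.choose_pos (by omega)
  positivity

lemma d_pos {m i : ℕ} (h : i ≤ m) : 0 < d m i := by
  rw [d_eq]
  apply mul_pos (by positivity)
  apply Finset.sum_pos'
  · intro k hk
    have := (A_pos m k).le
    positivity
  · refine ⟨m, Finset.mem_Icc.mpr ⟨h, le_refl m⟩, ?_⟩
    have : 0 < (Nat.choose m i : ℚ) := by
      exact_mod_cast Nat.choose_pos h
    exact mul_pos (A_pos m m) this

lemma d_top_zero (m : ℕ) : d m (m+1) = 0 := by
  rw [d_eq, Finset.Icc_eq_empty (by omega)]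
  simp

lemma d_m_m (m : ℕ) : d m m = (2:ℚ)^(-(2*(m:ℤ))) * (2:ℚ)^m * (Nat.choose (2*m) m : ℚ) := by
  rw [d_eq, Finset.Icc_self, Finset.sum_singleton]
  unfold A
  simp [Nat.sub_self]
  ring

/-- telescoping over Icc -/
lemma tele (g : ℕ → ℚ) : ∀ b a : ℕ, a ≤ b + 1 →
    ∑ k ∈ Finset.Icc a b, (g (k+1) - g k) = g (b+1) - g a := by
  intro b
  induction b with
  | zero =>
    intro a ha
    interval_cases a
    · simp
    · rw [Finset.Icc_eq_empty (by omega)]; simp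
  | succ n ih =>
    intro a ha
    rcases Nat.lt_or_ge a (n+2) with h | h
    · rw [Finset.sum_Icc_succ_top (by omega), ih a (by omega)]
      ring
    · have : a = n + 2 := by omega
      subst this
      rw [Finset.Icc_eq_empty (by omega)]
      simp


noncomputable def g (m i k : ℕ) : ℚ :=
  (i:ℚ) * (2*(m:ℚ)+1-2*(k:ℚ)) * A m k * (Nat.choose k i : ℚ)

/-- central binomial step, in ℚ -/
lemma central (j : ℕ) : (Nat.choose (2*j+2) (j+1) : ℚ) * ((j:ℚ)+1)^2
    = (2*(j:ℚ)+2)*(2*(j:ℚ)+1) * (Nat.choose (2*j) j : ℚ) := by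
  have h1 := congrArg (Nat.cast (R := ℚ)) (Nat.add_one_mul_choose_eq (2*j+1) j)
  have h2 := congrArg (Nat.cast (R := ℚ)) (Nat.add_one_mul_choose_eq (2*j) j)
  have h3 : Nat.choose (2*j+1) (j+1) = Nat.choose (2*j+1) j := by
    rw [← Nat.choose_symm (show j ≤ 2*j+1 by omega)]
    congr 1
    omega
  rw [h3] at h2
  push_cast at h1 h2
  nlinarith [h1, h2]

lemma ratio_succ {n p : ℕ} (hpn : p ≤ n) :
    (Nat.choose n (p+1) : ℚ) * ((p:ℚ)+1) = (Nat.choose n p : ℚ) * ((n:ℚ) - (p:ℚ)) := by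
  have h := congrArg (Nat.cast (R := ℚ)) (Nat.choose_succ_right_eq n p)
  push_cast at h
  rw [h]
  have : ((n - p : ℕ) : ℚ) = (n:ℚ) - (p:ℚ) := by
    push_cast [Nat.cast_sub hpn]; ring
  rw [this]

lemma ratio_succ2 {n p : ℕ} (hpn : p ≤ n) :
    (Nat.choose n (p+2) : ℚ) * ((p:ℚ)+2) = (Nat.choose n (p+1) : ℚ) * ((n:ℚ) - (p:ℚ) - 1) := by
  rcases Nat.lt_or_ge n (p+1) with h | h
  · have hn : n = p := by omega
    subst hn
    simp [Nat.choose_eq_zero_of_lt]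
  · have := ratio_succ (n := n) (p := p+1) h
    push_cast at this ⊢
    linarith [this]

set_option maxHeartbeats 2000000 in
lemma point (m i k : ℕ) (h1 : 1 ≤ i) (hik : i - 1 ≤ k) (hk : k + 1 ≤ m) :
    A m k * ((i:ℚ)*((i:ℚ)+1) * (Nat.choose k (i+1) : ℚ)
        + ((m:ℚ)+(i:ℚ))*((m:ℚ)+1-(i:ℚ)) * (Nat.choose k (i-1) : ℚ)
        - (i:ℚ)*(2*(m:ℚ)+1) * (Nat.choose k i : ℚ))
      = g m i (k+1) - g m i k := by
  obtain ⟨p, rfl⟩ : ∃ p, i = p + 1 := ⟨i - 1, by omega⟩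
  obtain ⟨j, rfl⟩ : ∃ j, m = k + j + 1 := ⟨m - k - 1, by omega⟩
  have hpk : p ≤ k := by omega
  unfold g A
  rw [show 2*(k+j+1) - 2*k = 2*j+2 by omega, show (k+j+1) - k = j+1 by omega,
      show 2*(k+j+1) - 2*(k+1) = 2*j by omega, show (k+j+1) - (k+1) = j by omega,
      show p + 1 - 1 = p by omega]
  simp only [show k+j+1+(k+1) = k+j+1+k+1 from by omega]
  have hB2 := central j
  have hD2 := congrArg (Nat.cast (R := ℚ)) (Nat.add_one_mul_choose_eq ((k+j+1)+k) k)
  push_cast at hD2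
  have hP := congrArg (Nat.cast (R := ℚ)) (Nat.choose_succ_succ (k) (p))
  push_cast at hP
  have hc1 := ratio_succ (n := k) (p := p) hpk
  have hc2 := ratio_succ2 (n := k) (p := p) hpk
  -- abbreviations
  set B := (Nat.choose (2*j) j : ℚ) with hB
  set B2 := (Nat.choose (2*j+2) (j+1) : ℚ) with hB2d
  set D := (Nat.choose ((k+j+1)+k) k : ℚ) with hD
  set D2 := (Nat.choose ((k+j+1)+k+1) (k+1) : ℚ) with hD2d
  set c0 := (Nat.choose k p : ℚ) with hc0
  set c1 := (Nat.choose k (p+1) : ℚ) with hc1d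
  set c2 := (Nat.choose k (p+2) : ℚ) with hc2d
  set P := (Nat.choose (k+1) (p+1) : ℚ) with hPd
  have hj1 : ((j:ℚ)+1) ≠ 0 := by positivity
  have hk1 : ((k:ℚ)+1) ≠ 0 := by positivity
  have hp1 : ((p:ℚ)+1) ≠ 0 := by positivity
  have hp2 : ((p:ℚ)+2) ≠ 0 := by positivity
  have eB2 : B2 = (2*(j:ℚ)+2)*(2*(j:ℚ)+1) * B / ((j:ℚ)+1)^2 := by
    field_simp
    apply mul_right_cancel₀ hj1; linear_combination hB2
  have eD2 : D2 = ((k:ℚ)+(j:ℚ)+1+(k:ℚ)+1) * D / ((k:ℚ)+1) := by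
    field_simp
    linarith [hD2]
  have ec2 : c2 = c1 * ((k:ℚ) - (p:ℚ) - 1) / ((p:ℚ)+2) := by
    field_simp
    linarith [hc2]
  have ec1 : c1 = c0 * ((k:ℚ) - (p:ℚ)) / ((p:ℚ)+1) := by
    field_simp
    linarith [hc1]
  have eP : P = c0 + c1 := hP
  rw [eB2, eD2, ec2, eP, ec1]
  push_cast
  field_simp
  ring

lemma point_top (m i : ℕ) (h1 : 1 ≤ i) (h2 : i ≤ m) :
    A m m * ((i:ℚ)*((i:ℚ)+1) * (Nat.choose m (i+1) : ℚ)
        + ((m:ℚ)+(i:ℚ))*((m:ℚ)+1-(i:ℚ)) * (Nat.choose m (i-1) : ℚ)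
        - (i:ℚ)*(2*(m:ℚ)+1) * (Nat.choose m i : ℚ))
      = - g m i m := by
  obtain ⟨p, rfl⟩ : ∃ p, i = p + 1 := ⟨i - 1, by omega⟩
  have hpm : p ≤ m := by omega
  unfold g
  rw [show p + 1 - 1 = p by omega]
  have hc1 := ratio_succ (n := m) (p := p) hpm
  have hc2 := ratio_succ2 (n := m) (p := p) hpm
  set c0 := (Nat.choose m p : ℚ) with hc0
  set c1 := (Nat.choose m (p+1) : ℚ) with hc1d
  set c2 := (Nat.choose m (p+2) : ℚ) with hc2d
  have hp1 : ((p:ℚ)+1) ≠ 0 := by positivity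
  have hp2 : ((p:ℚ)+2) ≠ 0 := by positivity
  have ec2 : c2 = c1 * ((m:ℚ) - (p:ℚ) - 1) / ((p:ℚ)+2) := by
    field_simp; linarith [hc2]
  have ec1 : c1 = c0 * ((m:ℚ) - (p:ℚ)) / ((p:ℚ)+1) := by
    field_simp; linarith [hc1]
  rw [ec2, ec1]
  push_cast
  field_simp
  ring

lemma Fq_tele (m i : ℕ) (h1 : 1 ≤ i) (h2 : i ≤ m) :
    ∑ k ∈ Finset.Icc (i-1) m, A m k *
      ((i:ℚ)*((i:ℚ)+1) * (Nat.choose k (i+1) : ℚ)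
        + ((m:ℚ)+(i:ℚ))*((m:ℚ)+1-(i:ℚ)) * (Nat.choose k (i-1) : ℚ)
        - (i:ℚ)*(2*(m:ℚ)+1) * (Nat.choose k i : ℚ)) = 0 := by
  obtain ⟨n, rfl⟩ : ∃ n, m = n + 1 := ⟨m - 1, by omega⟩
  rw [Finset.sum_Icc_succ_top (by omega)]
  have hmid : ∑ k ∈ Finset.Icc (i-1) n, A (n+1) k *
      ((i:ℚ)*((i:ℚ)+1) * (Nat.choose k (i+1) : ℚ)
        + ((n:ℚ)+1+(i:ℚ))*((n:ℚ)+1+1-(i:ℚ)) * (Nat.choose k (i-1) : ℚ)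
        - (i:ℚ)*(2*((n:ℚ)+1)+1) * (Nat.choose k i : ℚ))
      = ∑ k ∈ Finset.Icc (i-1) n, (g (n+1) i (k+1) - g (n+1) i k) := by
    apply Finset.sum_congr rfl
    intro k hk
    rw [Finset.mem_Icc] at hk
    have := point (n+1) i k h1 hk.1 (by omega)
    push_cast at this ⊢
    linarith [this]
  have htel := tele (g (n+1) i) n (i-1) (by omega)
  have hlast := point_top (n+1) i h1 h2
  have hg0 : g (n+1) i (i-1) = 0 := by
    unfold g
    rw [Nat.choose_eq_zero_of_lt (by omega)]
    simp
  push_cast at hmid htel hlast ⊢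
  rw [hmid, htel, hg0]
  linarith [hlast]

lemma rec_d (m i : ℕ) (h1 : 1 ≤ i) (h2 : i ≤ m) :
    (i:ℚ)*((i:ℚ)+1) * d m (i+1) + ((m:ℚ)+(i:ℚ))*((m:ℚ)+1-(i:ℚ)) * d m (i-1)
      = (i:ℚ)*(2*(m:ℚ)+1) * d m i := by
  have e1 : (∑ k ∈ Finset.Icc (i+1) m, A m k * (Nat.choose k (i+1) : ℚ))
      = ∑ k ∈ Finset.Icc (i-1) m, A m k * (Nat.choose k (i+1) : ℚ) := by
    apply Finset.sum_subset (Finset.Icc_subset_Icc (by omega) le_rfl)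
    intro x hx hnx
    rw [Finset.mem_Icc] at hx hnx
    rw [Nat.choose_eq_zero_of_lt (by omega)]
    simp
  have e2 : (∑ k ∈ Finset.Icc i m, A m k * (Nat.choose k i : ℚ))
      = ∑ k ∈ Finset.Icc (i-1) m, A m k * (Nat.choose k i : ℚ) := by
    apply Finset.sum_subset (Finset.Icc_subset_Icc (by omega) le_rfl)
    intro x hx hnx
    rw [Finset.mem_Icc] at hx hnx
    rw [Nat.choose_eq_zero_of_lt (by omega)]
    simp
  have key := Fq_tele m i h1 h2
  have key2 : (i:ℚ)*((i:ℚ)+1) * (∑ k ∈ Finset.Icc (i-1) m, A m k * (Nat.choose k (i+1):ℚ))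
      + ((m:ℚ)+(i:ℚ))*((m:ℚ)+1-(i:ℚ)) * (∑ k ∈ Finset.Icc (i-1) m, A m k * (Nat.choose k (i-1):ℚ))
      - (i:ℚ)*(2*(m:ℚ)+1) * (∑ k ∈ Finset.Icc (i-1) m, A m k * (Nat.choose k i:ℚ)) = 0 := by
    rw [Finset.mul_sum, Finset.mul_sum, Finset.mul_sum, ← Finset.sum_add_distrib,
        ← Finset.sum_sub_distrib]
    refine Eq.trans (Finset.sum_congr rfl fun k _ => by ring) key
  rw [d_eq, d_eq, d_eq, e1, e2]
  linear_combination ((2:ℚ)^(-(2*(m:ℤ)))) * key2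

/-- L4: (m+1-j)(m+j) d_{j-1} ≥ j (m+j+1) d_j, by downward induction -/
lemma L4aux (m : ℕ) : ∀ r j : ℕ, m = j + r → 1 ≤ j →
    ((m:ℚ)+1-(j:ℚ))*((m:ℚ)+(j:ℚ)) * d m (j-1) ≥ (j:ℚ)*((m:ℚ)+(j:ℚ)+1) * d m j := by
  intro r
  induction r with
  | zero =>
    intro j hj hj1
    have hjm : j = m := by omega
    subst hjm
    have hr := rec_d j j hj1 le_rfl
    have h0 : d j (j+1) = 0 := d_top_zero j
    rw [h0] at hr
    nlinarith [hr]
  | succ r ih =>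
    intro j hj hj1
    have hIH := ih (j+1) (by omega) (by omega)
    rw [show j + 1 - 1 = j by omega] at hIH
    have hr := rec_d m j hj1 (by omega)
    have hd1 : (0:ℚ) < d m j := d_pos (by omega)
    have hd2 : (0:ℚ) < d m (j+1) := d_pos (by omega)
    have hjm : ((j:ℚ)+1) ≤ (m:ℚ) := by exact_mod_cast (show j+1 ≤ m by omega)
    have hj1q : (1:ℚ) ≤ (j:ℚ) := by exact_mod_cast hj1
    push_cast at hIH
    have hstep : (((m:ℚ)-(j:ℚ)) * d m j) ≥ ((j:ℚ)+1) * d m (j+1) := by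
      nlinarith [hIH, hd2.le, show (0:ℚ) < (m:ℚ)+(j:ℚ)+1 by linarith]
    nlinarith [hr, hstep, mul_le_mul_of_nonneg_left hstep (show (0:ℚ) ≤ (j:ℚ) by positivity)]

lemma L4 (m j : ℕ) (h1 : 1 ≤ j) (h2 : j ≤ m) :
    ((m:ℚ)+1-(j:ℚ))*((m:ℚ)+(j:ℚ)) * d m (j-1) ≥ (j:ℚ)*((m:ℚ)+(j:ℚ)+1) * d m j :=
  L4aux m (m - j) j (by omega) h1

lemma L4' (m j : ℕ) (h1 : 1 ≤ j) (h2 : j ≤ m) :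
    ((m:ℚ)+1-(j:ℚ)) * d m (j-1) ≥ (j:ℚ) * d m j := by
  have h := L4 m j h1 h2
  have hd : (0:ℚ) ≤ d m j := (d_pos h2).le
  have hjm : ((j:ℚ)) ≤ (m:ℚ) := by exact_mod_cast h2
  have hj1q : (1:ℚ) ≤ (j:ℚ) := by exact_mod_cast h1
  have hpos : (0:ℚ) < (m:ℚ)+(j:ℚ) := by linarith
  nlinarith [h, hd, hpos]

lemma L5 (m i : ℕ) (h1 : 1 ≤ i) (h2 : i + 1 ≤ m) :
    (i:ℚ) * (d m i)^2 ≥ ((i:ℚ)+1) * d m (i+1) * d m (i-1) := by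
  have hr := rec_d m i h1 (by omega)
  have hA := L4' m (i+1) (by omega) h2
  rw [show i + 1 - 1 = i by omega] at hA
  push_cast at hA
  have hdi : (0:ℚ) < d m i := d_pos (by omega)
  have h1q : (1:ℚ) ≤ (i:ℚ) := by exact_mod_cast h1
  have him : (i:ℚ)+1 ≤ (m:ℚ) := by exact_mod_cast h2
  have hb : ((m:ℚ)+1-(i:ℚ)) * d m i - ((i:ℚ)+1) * d m (i+1) ≥ 0 := by
    nlinarith [hA, hdi.le]
  have ha : ((m:ℚ)+(i:ℚ)) * d m i - ((i:ℚ)+1) * d m (i+1) ≥ 0 := by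
    nlinarith [hb, hdi.le, h1q]
  have key : ((m:ℚ)+(i:ℚ))*((m:ℚ)+1-(i:ℚ)) * ((i:ℚ)*(d m i)^2 - ((i:ℚ)+1)*d m (i+1)*d m (i-1))
      = (i:ℚ) * (((m:ℚ)+(i:ℚ))*d m i - ((i:ℚ)+1)*d m (i+1))
          * (((m:ℚ)+1-(i:ℚ))*d m i - ((i:ℚ)+1)*d m (i+1)) := by
    linear_combination (-(((i:ℚ)+1) * d m (i+1))) * hr
  have h6 : (0:ℚ) ≤ ((m:ℚ)+(i:ℚ))*((m:ℚ)+1-(i:ℚ))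
      * ((i:ℚ)*(d m i)^2 - ((i:ℚ)+1)*d m (i+1)*d m (i-1)) := by
    rw [key]
    have hi0 : (0:ℚ) ≤ (i:ℚ) := by positivity
    exact mul_nonneg (mul_nonneg hi0 ha) hb
  have hpos : (0:ℚ) < ((m:ℚ)+(i:ℚ))*((m:ℚ)+1-(i:ℚ)) := by nlinarith [h1q, him]
  nlinarith [h6, hpos]

/-- L6: 2m d_i ≥ (2m+1) C(m,i) d_m, downward induction -/
lemma L6aux (m : ℕ) : ∀ r i : ℕ, m = i + 1 + r → 1 ≤ i →
    (2*(m:ℚ)) * d m i ≥ (2*(m:ℚ)+1) * (Nat.choose m i : ℚ) * d m m := by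
  intro r
  induction r with
  | zero =>
    intro i hi hi1
    have him : m = i + 1 := by omega
    subst him
    have hr := rec_d (i+1) (i+1) (by omega) le_rfl
    have h0 : d (i+1) (i+1+1) = 0 := d_top_zero (i+1)
    rw [h0] at hr
    rw [show i+1-1 = i by omega] at hr
    have hch : (Nat.choose (i+1) i : ℚ) = (i:ℚ)+1 := by
      rw [Nat.choose_succ_self_right]
      push_cast
      ring
    rw [hch]
    push_cast at hr ⊢
    nlinarith [hr]
  | succ r ih =>
    intro i hi hi1
    have hIH := ih (i+1) (by omega) (by omega)
    have hA := L4' m (i+1) (by omega) (by omega)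
    rw [show i + 1 - 1 = i by omega] at hA
    push_cast at hA
    have hch := congrArg (Nat.cast (R := ℚ)) (Nat.choose_succ_right_eq m i)
    push_cast at hch
    have hsub : ((m - i : ℕ) : ℚ) = (m:ℚ) - (i:ℚ) := by
      have : i ≤ m := by omega
      push_cast [Nat.cast_sub this]
      ring
    rw [hsub] at hch
    -- hch : C(m,i+1)*(i+1) = C(m,i)*(m-i)
    have hdm : (0:ℚ) ≤ d m m := (d_pos le_rfl).le
    have hdi1 : (0:ℚ) ≤ d m (i+1) := (d_pos (by omega)).le
    have hmi : (1:ℚ) ≤ (m:ℚ) - (i:ℚ) := by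
      have : i + 1 ≤ m := by omega
      have := (show ((i:ℚ)+1) ≤ (m:ℚ) by exact_mod_cast this)
      linarith
    -- (m-i) d_i ≥ (i+1) d_{i+1};  2m d_{i+1} ≥ (2m+1) C(m,i+1) d_m
    -- 2m (m-i) d_i ≥ 2m (i+1) d_{i+1} ≥ (2m+1)(i+1)C(m,i+1) d_m = (2m+1)(m-i)C(m,i) d_m
    have hm0 : (0:ℚ) ≤ 2*(m:ℚ) := by positivity
    have step1 : 2*(m:ℚ) * (((m:ℚ)-(i:ℚ)) * d m i) ≥ 2*(m:ℚ) * (((i:ℚ)+1) * d m (i+1)) := by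
      apply mul_le_mul_of_nonneg_left _ hm0
      have h' : ((m:ℚ)+1-((i:ℚ)+1)) * d m i ≥ ((i:ℚ)+1) * d m (i+1) := hA
      linarith [h']
    have step2 : ((i:ℚ)+1) * (2*(m:ℚ) * d m (i+1)) ≥ ((i:ℚ)+1) * ((2*(m:ℚ)+1) * (Nat.choose m (i+1) : ℚ) * d m m) := by
      apply mul_le_mul_of_nonneg_left hIH (by positivity)
    have hCpos : (0:ℚ) ≤ (Nat.choose m i : ℚ) := by positivity
    have hch2 : (2*(m:ℚ)+1) * ((Nat.choose m (i+1):ℚ) * ((i:ℚ)+1)) * d m m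
        = (2*(m:ℚ)+1) * ((Nat.choose m i:ℚ) * ((m:ℚ)-(i:ℚ))) * d m m := by rw [hch]
    nlinarith [step1, step2, hch2, hdm, hmi, show (0:ℚ) < (m:ℚ)-(i:ℚ) by linarith]

lemma L6 (m i : ℕ) (h1 : 1 ≤ i) (h2 : i + 1 ≤ m) :
    (2*(m:ℚ)) * d m i ≥ (2*(m:ℚ)+1) * (Nat.choose m i : ℚ) * d m m :=
  L6aux m (m - i - 1) i (by omega) h1

lemma choose_ge (m i : ℕ) (h1 : 1 ≤ i) (h2 : i + 1 ≤ m) : m ≤ Nat.choose m i := by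
  have key := Nat.add_one_mul_choose_eq (m-1) (i-1)
  rw [show m - 1 + 1 = m by omega, show i - 1 + 1 = i by omega] at key
  -- key : m * choose (m-1) (i-1) = choose m i * i
  have hge : i ≤ Nat.choose (m-1) (i-1) := by
    calc i = Nat.choose (i-1+1) (i-1) := by rw [Nat.choose_succ_self_right]; omega
    _ ≤ Nat.choose (m-1) (i-1) := Nat.choose_le_choose _ (by omega)
  have : m * i ≤ Nat.choose m i * i := by
    calc m * i ≤ m * Nat.choose (m-1) (i-1) := Nat.mul_le_mul_left m hge
    _ = Nat.choose m i * i := key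
  exact Nat.le_of_mul_le_mul_right this (by omega)

end MollAux

theorem stmt15 (m : ℕ) (hm : 2 ≤ m) :
    (∀ i : ℕ, 1 ≤ i → i ≤ m - 1 →
      (i:ℚ)*((i:ℚ)+1) * ((d m i)^2 - d m (i+1) * d m (i-1))
        > (m:ℚ)*((m:ℚ)+1) * (d m m)^2)
    ∧ (m:ℚ)*((m:ℚ)+1) * (d m m)^2
        = (2:ℚ)^(-(2*(m:ℤ))) * m * (m+1) * (Nat.choose (2*m) m : ℚ)^2 := by
  constructor
  · intro i hi1 hi2
    have hi2' : i + 1 ≤ m := by omega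
    have h5 := MollAux.L5 m i hi1 hi2'
    have h6 := MollAux.L6 m i hi1 hi2'
    have h7 : (m:ℚ) ≤ (Nat.choose m i : ℚ) := by
      exact_mod_cast MollAux.choose_ge m i hi1 hi2'
    have hdm : (0:ℚ) < d m m := MollAux.d_pos le_rfl
    have hdi : (0:ℚ) < d m i := MollAux.d_pos (by omega)
    have hiq : (1:ℚ) ≤ (i:ℚ) := by exact_mod_cast hi1
    have hmq : (2:ℚ) ≤ (m:ℚ) := by exact_mod_cast hm
    have h8 : 2 * d m i ≥ (2*(m:ℚ)+1) * d m m := by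
      nlinarith [h6, mul_le_mul_of_nonneg_left h7
        (show (0:ℚ) ≤ (2*(m:ℚ)+1) * d m m by positivity), hdm.le, hmq]
    have h9 : ((2*(m:ℚ)+1) * d m m)^2 ≤ (2 * d m i)^2 := by
      apply pow_le_pow_left₀ (by positivity) h8
    nlinarith [h9, hdm, hdi.le, hiq, h5,
      mul_le_mul_of_nonneg_left h5 (show (0:ℚ) ≤ (i:ℚ) by positivity),
      mul_le_mul_of_nonneg_right hiq (sq_nonneg (d m i)), sq_nonneg (d m m)]
  · rw [MollAux.d_m_m]
    have hz : (2:ℚ)^(-(2*(m:ℤ))) * (2:ℚ)^(2*m) = 1 := by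
      rw [← zpow_natCast (2:ℚ) (2*m), ← zpow_add₀ (two_ne_zero)]
      norm_num
    linear_combination ((m:ℚ)*((m:ℚ)+1)*(Nat.choose (2*m) m : ℚ)^2
      * (2:ℚ)^(-(2*(m:ℤ)))) * hz
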